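/- For any model a of PERM_n, any combinatorial rectangle R = r_1(Y) ∧ r_2(Z) appearing in a rectangle cover of PERM_n, where a satisfies R: every other model a' of R satisfies I(a') = I(a) and I'(a') = I'(a), where I(a) = {i : x_{i,π_a(i)} ∈ Y} and I'(a) = π_a(I(a)). Consequently R has at most k!·(n−k)! models of PERM_n, where k = |I(a)|. -/

import Mathlib

/-- A predicate on assignments depends only on the variables in `S` if its
value is unchanged by modifications outside `S`. -/
def DependsOnVars {V : Type} (r : (V → Bool) → Prop) (S : Set V) : Prop :=
  ∀ a b : V → Bool, (∀ v ∈ S, a v = b v) → (r a ↔ r b)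

/-- The permutation matrix assignment associated to a permutation π:
the variable x_{ij} is true iff j = π(i). -/
def permMat {n : ℕ} (π : Equiv.Perm (Fin n)) : Fin n × Fin n → Bool :=
  fun p => decide (π p.1 = p.2)

lemma hybrid_subset {n : ℕ} (Y : Finset (Fin n × Fin n)) (π π' σ : Equiv.Perm (Fin n))
    (hin : ∀ p ∈ Y, permMat σ p = permMat π p)
    (hout : ∀ p ∉ Y, permMat σ p = permMat π' p) :
    ((Finset.univ.filter fun i => (i, π i) ∈ Y) ⊆
      (Finset.univ.filter fun i => (i, π' i) ∈ Y)) ∧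
    ((Finset.univ.filter fun i => (i, π i) ∈ Y).image (fun i => π i) ⊆
      (Finset.univ.filter fun i => (i, π' i) ∈ Y).image (fun i => π' i)) := by
  have hσπ : ∀ i : Fin n, (i, π i) ∈ Y → σ i = π i := by
    intro i hi
    have := hin _ hi
    simpa [permMat] using this
  constructor
  · intro i hi
    simp only [Finset.mem_filter, Finset.mem_univ, true_and] at hi ⊢
    by_contra h
    have h1 := hout _ h
    have hσ' : σ i = π' i := by simpa [permMat] using h1
    have h2 := hσπ i hi
    have heq : π' i = π i := by rw [← hσ', h2]
    rw [heq] at h; exact h hi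
  · intro j hj
    simp only [Finset.mem_image, Finset.mem_filter, Finset.mem_univ, true_and] at hj ⊢
    obtain ⟨i, hi, rfl⟩ := hj
    have hσi := hσπ i hi
    refine ⟨π'.symm (π i), ?_, by simp⟩
    rw [Equiv.apply_symm_apply]
    by_contra h
    have h1 := hout _ h
    have hσ' : σ (π'.symm (π i)) = π i := by
      simpa [permMat, Equiv.apply_symm_apply] using h1
    have hii : π'.symm (π i) = i := σ.injective (by rw [hσ', hσi])
    rw [hii] at h
    exact h hi

lemma models_eq {n : ℕ} (Y : Finset (Fin n × Fin n))
    (r1 r2 : (Fin n × Fin n → Bool) → Prop)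
    (h1 : DependsOnVars r1 ↑Y) (h2 : DependsOnVars r2 (↑Y : Set (Fin n × Fin n))ᶜ)
    (himp : ∀ a, r1 a ∧ r2 a → ∃ σ : Equiv.Perm (Fin n), a = permMat σ)
    (π π' : Equiv.Perm (Fin n))
    (hπ : r1 (permMat π) ∧ r2 (permMat π))
    (hπ' : r1 (permMat π') ∧ r2 (permMat π')) :
    (Finset.univ.filter fun i => (i, π i) ∈ Y) =
      (Finset.univ.filter fun i => (i, π' i) ∈ Y) ∧
    (Finset.univ.filter fun i => (i, π i) ∈ Y).image (fun i => π i) =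
      (Finset.univ.filter fun i => (i, π' i) ∈ Y).image (fun i => π' i) := by
  have main : ∀ τ τ' : Equiv.Perm (Fin n),
      r1 (permMat τ) ∧ r2 (permMat τ) → r1 (permMat τ') ∧ r2 (permMat τ') →
      ((Finset.univ.filter fun i => (i, τ i) ∈ Y) ⊆
        (Finset.univ.filter fun i => (i, τ' i) ∈ Y)) ∧
      ((Finset.univ.filter fun i => (i, τ i) ∈ Y).image (fun i => τ i) ⊆
        (Finset.univ.filter fun i => (i, τ' i) ∈ Y).image (fun i => τ' i)) := by
    intro τ τ' hτ hτ'
    set a : Fin n × Fin n → Bool :=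
      fun p => if p ∈ Y then permMat τ p else permMat τ' p with ha
    have hr1 : r1 a := by
      refine (h1 a (permMat τ) ?_).mpr hτ.1
      intro v hv
      simp only [Finset.mem_coe] at hv
      simp [ha, hv]
    have hr2 : r2 a := by
      refine (h2 a (permMat τ') ?_).mpr hτ'.2
      intro v hv
      simp only [Set.mem_compl_iff, Finset.mem_coe] at hv
      simp [ha, hv]
    obtain ⟨σ, hσ⟩ := himp a ⟨hr1, hr2⟩
    refine hybrid_subset Y τ τ' σ ?_ ?_
    · intro p hp; rw [← hσ]; simp [ha, hp]
    · intro p hp; rw [← hσ]; simp [ha, hp]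
  obtain ⟨s1, i1⟩ := main π π' hπ hπ'
  obtain ⟨s2, i2⟩ := main π' π hπ' hπ
  exact ⟨Finset.Subset.antisymm s1 s2, Finset.Subset.antisymm i1 i2⟩

/-- For a rectangle r1(Y) ∧ r2(Z) from a rectangle cover of PERM_n (so the
rectangle implies PERM_n): any two permutation-matrix models π, π' of the
rectangle satisfy I(π) = I(π') and π(I(π)) = π'(I(π')), where
I(π) = {i : x_{i,π(i)} ∈ Y}; consequently the rectangle has at most
k!·(n−k)! models, where k = |I(π)|. -/
theorem stmt8 {n : ℕ} (Y : Finset (Fin n × Fin n))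
    (r1 r2 : (Fin n × Fin n → Bool) → Prop)
    (h1 : DependsOnVars r1 ↑Y) (h2 : DependsOnVars r2 (↑Y : Set (Fin n × Fin n))ᶜ)
    (himp : ∀ a, r1 a ∧ r2 a → ∃ σ : Equiv.Perm (Fin n), a = permMat σ)
    (π π' : Equiv.Perm (Fin n))
    (hπ : r1 (permMat π) ∧ r2 (permMat π))
    (hπ' : r1 (permMat π') ∧ r2 (permMat π')) :
    (Finset.univ.filter fun i => (i, π i) ∈ Y) =
      (Finset.univ.filter fun i => (i, π' i) ∈ Y) ∧
    (Finset.univ.filter fun i => (i, π i) ∈ Y).image (fun i => π i) =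
      (Finset.univ.filter fun i => (i, π' i) ∈ Y).image (fun i => π' i) ∧
    Nat.card {σ : Equiv.Perm (Fin n) // r1 (permMat σ) ∧ r2 (permMat σ)} ≤
      Nat.factorial (Finset.univ.filter fun i => (i, π i) ∈ Y).card *
      Nat.factorial (n - (Finset.univ.filter fun i => (i, π i) ∈ Y).card) := by
  obtain ⟨e1, e2⟩ := models_eq Y r1 r2 h1 h2 himp π π' hπ hπ'
  refine ⟨e1, e2, ?_⟩
  set I : Finset (Fin n) := Finset.univ.filter fun i => (i, π i) ∈ Y with hI
  set J : Finset (Fin n) := I.image (fun i => π i) with hJ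
  -- every model has the same I and J
  have key : ∀ τ : Equiv.Perm (Fin n), r1 (permMat τ) ∧ r2 (permMat τ) →
      (Finset.univ.filter fun i => (i, τ i) ∈ Y) = I ∧
      (Finset.univ.filter fun i => (i, τ i) ∈ Y).image (fun i => τ i) = J := by
    intro τ hτ
    obtain ⟨a, b⟩ := models_eq Y r1 r2 h1 h2 himp π τ hπ hτ
    exact ⟨a.symm, b.symm⟩
  have memJ : ∀ τ : Equiv.Perm (Fin n), r1 (permMat τ) ∧ r2 (permMat τ) →
      ∀ i ∈ I, τ i ∈ J := by
    intro τ hτ i hi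
    obtain ⟨a, b⟩ := key τ hτ
    rw [← b]
    exact Finset.mem_image_of_mem _ (a ▸ hi)
  have memJc : ∀ τ : Equiv.Perm (Fin n), r1 (permMat τ) ∧ r2 (permMat τ) →
      ∀ i ∉ I, τ i ∉ J := by
    intro τ hτ i hi hmem
    obtain ⟨a, b⟩ := key τ hτ
    rw [← b] at hmem
    obtain ⟨i0, hi0, hii⟩ := Finset.mem_image.mp hmem
    have : i0 = i := τ.injective hii
    exact hi (a ▸ this ▸ hi0)
  classical
  -- build injection into embeddings
  let f : {σ : Equiv.Perm (Fin n) // r1 (permMat σ) ∧ r2 (permMat σ)} →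
      ((I : Finset (Fin n)) ↪ (J : Finset (Fin n))) ×
      ((Iᶜ : Finset (Fin n)) ↪ (Jᶜ : Finset (Fin n))) :=
    fun τ =>
      (⟨fun i => ⟨τ.1 i.1, memJ τ.1 τ.2 i.1 i.2⟩,
        fun x y hxy => Subtype.ext (τ.1.injective (congrArg Subtype.val hxy))⟩,
       ⟨fun i => ⟨τ.1 i.1, Finset.mem_compl.mpr
          (memJc τ.1 τ.2 i.1 (Finset.mem_compl.mp i.2))⟩,
        fun x y hxy => Subtype.ext (τ.1.injective (congrArg Subtype.val hxy))⟩)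
  have hfinj : Function.Injective f := by
    intro τ τ' hff
    have hfst := congrArg Prod.fst hff
    have hsnd := congrArg Prod.snd hff
    apply Subtype.ext
    apply Equiv.ext
    intro i
    by_cases hi : i ∈ I
    · have := DFunLike.congr_fun hfst ⟨i, hi⟩
      exact congrArg Subtype.val this
    · have := DFunLike.congr_fun hsnd ⟨i, Finset.mem_compl.mpr hi⟩
      exact congrArg Subtype.val this
  have hcard := Nat.card_le_card_of_injective f hfinj
  have hJcard : J.card = I.card := Finset.card_image_of_injective I π.injective
  have hIc : (Iᶜ : Finset (Fin n)).card = n - I.card := by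
    rw [Finset.card_compl, Fintype.card_fin]
  have hJc : (Jᶜ : Finset (Fin n)).card = n - I.card := by
    rw [Finset.card_compl, Fintype.card_fin, hJcard]
  calc Nat.card {σ : Equiv.Perm (Fin n) // r1 (permMat σ) ∧ r2 (permMat σ)}
      ≤ Nat.card (((I : Finset (Fin n)) ↪ (J : Finset (Fin n))) ×
          ((Iᶜ : Finset (Fin n)) ↪ (Jᶜ : Finset (Fin n)))) := hcard
    _ = Nat.factorial I.card * Nat.factorial (n - I.card) := by
        rw [Nat.card_eq_fintype_card, Fintype.card_prod,
          Fintype.card_embedding_eq, Fintype.card_embedding_eq]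
        simp only [Fintype.card_coe]
        rw [hJcard, hIc, hJc, Nat.descFactorial_self, Nat.descFactorial_self]
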